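/- Let p be a prime and let γ be the permutation of ℤ/p given by γ(x) = x + 1. A permutation σ of ℤ/p lies in the normalizer of the cyclic subgroup generated by γ in the symmetric group on ℤ/p if and only if there exist s ∈ (ℤ/p)ˣ and t ∈ ℤ/p such that σ(x) = s·x + t for all x ∈ ℤ/p. -/

import Mathlib

lemma stmt10_zpow (p : ℕ) (k : ℤ) :
    (Equiv.addRight (1 : ZMod p)) ^ k = Equiv.addRight ((k : ZMod p)) := by
  induction k using Int.induction_on with
  | zero => ext x; simp
  | succ n ih =>
      rw [zpow_add_one, ih]; ext x
      simp [Equiv.Perm.mul_apply, add_assoc]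
      push_cast; ring
  | pred n ih =>
      rw [zpow_sub_one, ih]; ext x
      simp [Equiv.Perm.mul_apply]
      push_cast; ring

lemma stmt10_mem_zpowers (p : ℕ) [NeZero p] (π : Equiv.Perm (ZMod p)) :
    π ∈ Subgroup.zpowers (Equiv.addRight (1 : ZMod p)) ↔
      ∃ c : ZMod p, π = Equiv.addRight c := by
  constructor
  · rintro ⟨k, rfl⟩
    exact ⟨(k : ZMod p), stmt10_zpow p k⟩
  · rintro ⟨c, rfl⟩
    refine ⟨(c.val : ℤ), ?_⟩
    show Equiv.addRight (1 : ZMod p) ^ ((c.val : ℤ)) = _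
    rw [stmt10_zpow p]
    congr 1
    push_cast
    rw [ZMod.natCast_val, ZMod.cast_id]

/-- Let `p` be a prime and `γ` the translation `x ↦ x + 1` of `ℤ/p`.
A permutation `σ` of `ℤ/p` lies in the normalizer of the cyclic subgroup generated by `γ`
iff there are `s ∈ (ℤ/p)ˣ` and `t ∈ ℤ/p` with `σ x = s * x + t` for all `x`. -/
theorem stmt10 (p : ℕ) (hp : p.Prime) (σ : Equiv.Perm (ZMod p)) :
    σ ∈ Subgroup.normalizer (Subgroup.zpowers (Equiv.addRight (1 : ZMod p))) ↔
      ∃ (s : (ZMod p)ˣ) (t : ZMod p), ∀ x : ZMod p, σ x = (s : ZMod p) * x + t := by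
  haveI : Fact p.Prime := ⟨hp⟩
  rw [Subgroup.mem_normalizer_iff]
  constructor
  · intro h
    have hg : σ * Equiv.addRight (1 : ZMod p) * σ⁻¹ ∈
        Subgroup.zpowers (Equiv.addRight (1 : ZMod p)) := by
      rw [← h]; exact Subgroup.mem_zpowers _
    rw [stmt10_mem_zpowers] at hg
    obtain ⟨c, hc⟩ := hg
    have key : ∀ y : ZMod p, σ (y + 1) = σ y + c := by
      intro y
      have := congrArg (fun e => e.toFun (σ y)) hc
      simpa [Equiv.Perm.mul_apply] using this
    have hnat : ∀ n : ℕ, σ (n : ZMod p) = c * n + σ 0 := by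
      intro n
      induction n with
      | zero => simp
      | succ n ih => push_cast; rw [key, ih]; ring
    have haff : ∀ x : ZMod p, σ x = c * x + σ 0 := by
      intro x
      have := hnat x.val
      simpa [ZMod.natCast_val, ZMod.cast_id] using this
    have hc0 : c ≠ 0 := by
      intro h0
      have h1 : σ 1 = σ 0 := by
        have := haff 1; rw [h0] at this; simpa using this
      exact one_ne_zero (σ.injective h1)
    exact ⟨Units.mk0 c hc0, σ 0, fun x => by simpa using haff x⟩
  · rintro ⟨s, t, hst⟩ π
    have hσinv : ∀ x : ZMod p, σ⁻¹ x = (s⁻¹ : (ZMod p)ˣ) * (x - t) := by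
      intro x
      apply σ.injective
      rw [show σ (σ⁻¹ x) = x from (Equiv.eq_symm_apply σ).mp rfl, hst]
      field_simp
      simp only [Units.mul_inv, one_mul]; ring
    rw [stmt10_mem_zpowers, stmt10_mem_zpowers]
    constructor
    · rintro ⟨c, rfl⟩
      refine ⟨s * c, ?_⟩
      ext x
      simp only [Equiv.Perm.mul_apply, Equiv.coe_addRight]
      rw [hσinv, hst]
      field_simp
      linear_combination (x - t) * s.mul_inv
    · rintro ⟨c, hc⟩
      refine ⟨(s⁻¹ : (ZMod p)ˣ) * c, ?_⟩
      have : π = σ⁻¹ * (σ * π * σ⁻¹) * σ := by group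
      rw [this, hc]
      ext x
      simp only [Equiv.Perm.mul_apply, Equiv.coe_addRight]
      rw [hst, hσinv]
      field_simp
      linear_combination x * s.inv_mul
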